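/- For k ≥ 3, u > 0, if |λ| < u(1 - 2/k) then the interior equilibrium x̃ = λ/(2u(1-2/k)) + 1/2 lies strictly in (0,1), and the dynamics ẋ = F(x) restricted to [0,1] has x̃ as an unstable equilibrium separating the basins of attraction of the two stable equilibria 0 and 1: solutions with x(0) ∈ (x̃, 1) converge to 1 and solutions with x(0) ∈ (0, x̃) converge to 0. -/

import Mathlib

open Filter Set

/-- Uniqueness barrier: a solution of `ẋ = F x` that ever equals an equilibrium value `c`
must start at `c`. -/
theorem sol_eq_of_hits (F : ℝ → ℝ) (hFd : Differentiable ℝ F) (hFd' : Continuous (deriv F))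
    (c : ℝ) (hc : F c = 0)
    (f : ℝ → ℝ) (hf : ∀ t, HasDerivAt f (F (f t)) t)
    (T : ℝ) (hT : f T = c) : f 0 = c := by
  have hfc : Continuous f := by
    have : Differentiable ℝ f := fun t => (hf t).differentiableAt
    exact this.continuous
  set lo : ℝ := min T 0 - 1 with hlo
  set hi : ℝ := max T 0 + 1 with hhi
  have hloT : lo < T := by simp only [hlo]; have := min_le_left T 0; linarith
  have hThi : T < hi := by simp only [hhi]; have := le_max_left T 0; linarith
  have hlo0 : lo < 0 := by simp only [hlo]; have := min_le_right T 0; linarith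
  have h0hi : (0:ℝ) < hi := by simp only [hhi]; have := le_max_right T 0; linarith
  -- bound the solution on [lo, hi]
  obtain ⟨C, hC⟩ := (isCompact_Icc (a := lo) (b := hi)).exists_bound_of_continuousOn
    hfc.continuousOn
  set R : ℝ := max C |c| with hR
  set S : Set ℝ := Icc (-R) R with hSdef
  have hcS : c ∈ S := by
    constructor
    · have := le_max_right C |c|; have := neg_abs_le c; simp only [hR]; linarith
    · have := le_max_right C |c|; have := le_abs_self c; simp only [hR]; linarith
  have hfS : ∀ t ∈ Icc lo hi, f t ∈ S := by
    intro t ht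
    have := hC t ht
    rw [Real.norm_eq_abs, abs_le] at this
    have h1 := le_max_left C |c|
    exact ⟨by simp only [hR]; linarith, by simp only [hR]; linarith⟩
  -- Lipschitz constant on S
  obtain ⟨K, hK⟩ := (isCompact_Icc (a := -R) (b := R)).exists_bound_of_continuousOn
    hFd'.continuousOn
  have hlip : LipschitzOnWith K.toNNReal F S := by
    refine (convex_Icc _ _).lipschitzOnWith_of_nnnorm_deriv_le
      (fun x _ => hFd x) (fun x hx => ?_)
    rw [← norm_toNNReal]
    exact Real.toNNReal_mono (hK x hx)
  have key := ODE_solution_unique_of_mem_Icc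
    (v := fun _ x => F x) (s := fun _ => S) (K := K.toNNReal)
    (fun _ _ => hlip) (t₀ := T) (a := lo) (b := hi) ⟨hloT, hThi⟩
    hfc.continuousOn (fun t _ => hf t)
    (fun t ht => hfS t (Ioo_subset_Icc_self ht))
    (g := fun _ => c) continuousOn_const
    (fun t _ => by simpa [hc] using hasDerivAt_const t c)
    (fun _ _ => hcS) hT
  exact key ⟨hlo0.le, h0hi.le⟩

/-- Generic 1-D phase line lemma: if `F` vanishes at `a` and `b` and is positive on `(a,b)`,
then any global solution starting in `(a,b)` converges (monotonically) to `b`. -/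
theorem tendsto_of_pos_between
    (F : ℝ → ℝ) (hFd : Differentiable ℝ F) (hFd' : Continuous (deriv F))
    (a b : ℝ) (hFa : F a = 0) (hFb : F b = 0)
    (hpos : ∀ x ∈ Ioo a b, 0 < F x)
    (f : ℝ → ℝ) (hf : ∀ t, HasDerivAt f (F (f t)) t)
    (h0 : f 0 ∈ Ioo a b) :
    Tendsto f atTop (nhds b) := by
  have hfc : Continuous f := by
    have : Differentiable ℝ f := fun t => (hf t).differentiableAt
    exact this.continuous
  have hne_a : ∀ t, f t ≠ a := by
    intro t h
    exact absurd (sol_eq_of_hits F hFd hFd' a hFa f hf t h) (ne_of_gt h0.1)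
  have hne_b : ∀ t, f t ≠ b := by
    intro t h
    exact absurd (sol_eq_of_hits F hFd hFd' b hFb f hf t h) (ne_of_lt h0.2)
  have hmem : ∀ t, f t ∈ Ioo a b := by
    intro t
    constructor
    · by_contra hle
      push_neg at hle
      have ha_mem : a ∈ uIcc (f t) (f 0) := by
        rw [Set.mem_uIcc]; exact Or.inl ⟨hle, h0.1.le⟩
      obtain ⟨s, _, hs⟩ := intermediate_value_uIcc (f := f) (a := t) (b := 0)
        hfc.continuousOn ha_mem
      exact hne_a s hs
    · by_contra hle
      push_neg at hle
      have hb_mem : b ∈ uIcc (f 0) (f t) := by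
        rw [Set.mem_uIcc]; exact Or.inl ⟨h0.2.le, hle⟩
      obtain ⟨s, _, hs⟩ := intermediate_value_uIcc (f := f) (a := 0) (b := t)
        hfc.continuousOn hb_mem
      exact hne_b s hs
  have hmono : StrictMono f := by
    apply strictMono_of_deriv_pos
    intro t
    rw [(hf t).deriv]
    exact hpos _ (hmem t)
  have hbdd : BddAbove (Set.range f) := by
    refine ⟨b, ?_⟩
    rintro y ⟨t, rfl⟩
    exact (hmem t).2.le
  have htend : Tendsto f atTop (nhds (⨆ t, f t)) :=
    tendsto_atTop_ciSup hmono.monotone hbdd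
  set L : ℝ := ⨆ t, f t with hLdef
  have hfL : ∀ t, f t ≤ L := fun t => le_ciSup hbdd t
  have hL_le : L ≤ b := ciSup_le fun t => (hmem t).2.le
  suffices hLb : L = b by rwa [hLb] at htend
  by_contra hLb
  have hLlt : L < b := lt_of_le_of_ne hL_le hLb
  have hsub : Icc (f 0) L ⊆ Ioo a b := fun x hx =>
    ⟨lt_of_lt_of_le h0.1 hx.1, lt_of_le_of_lt hx.2 hLlt⟩
  obtain ⟨x₀, hx₀, hminx⟩ := isCompact_Icc.exists_isMinOn ⟨f 0, le_refl _, hfL 0⟩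
    (hFd.continuous.continuousOn (s := Icc (f 0) L))
  set m : ℝ := F x₀ with hmdef
  have hm : 0 < m := hpos _ (hsub hx₀)
  have hminx' : ∀ y ∈ Icc (f 0) L, m ≤ F y := fun y hy => hminx hy
  -- linear growth: for t ≥ 0, f 0 + m * t ≤ f t
  have hgrow : ∀ t : ℝ, 0 ≤ t → f 0 + m * t ≤ f t := by
    intro t ht
    set g : ℝ → ℝ := fun s => f s - m * s with hgdef
    have hg' : ∀ s, HasDerivAt g (F (f s) - m) s := by
      intro s
      have h1 : HasDerivAt (fun s : ℝ => m * s) m s := by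
        simpa using (hasDerivAt_id s).const_mul m
      exact (hf s).sub h1
    have hgmono : MonotoneOn g (Ici (0:ℝ)) := by
      apply monotoneOn_of_deriv_nonneg (convex_Ici 0)
      · exact (Continuous.sub hfc (continuous_const.mul continuous_id)).continuousOn
      · intro s _
        exact (hg' s).differentiableAt.differentiableWithinAt
      · intro s hs
        rw [(hg' s).deriv]
        have hs0 : (0:ℝ) ≤ s := le_of_lt (by simpa using hs)
        have hfs : f s ∈ Icc (f 0) L := ⟨hmono.monotone hs0, hfL s⟩
        have := hminx' _ hfs
        linarith
    have := hgmono (self_mem_Ici) (mem_Ici.mpr ht) ht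
    simp only [hgdef] at this
    nlinarith
  -- contradiction: f eventually exceeds b
  have hdivnn : 0 ≤ (b - f 0) / m := div_nonneg (by linarith [h0.2]) hm.le
  have hgt := hgrow ((b - f 0) / m + 1) (by linarith)
  have hdiv : m * ((b - f 0) / m) = b - f 0 := by field_simp
  have hcon : b < f ((b - f 0) / m + 1) := by nlinarith
  exact absurd hcon (not_lt.mpr (hmem _).2.le)

set_option maxHeartbeats 1000000 in
/-- Bistability: for `k ≥ 3`, `u > 0` and `|λ| < u(1 - 2/k)`, the interior
equilibrium `x̃ = λ/(2u(1-2/k)) + 1/2` lies strictly in `(0,1)`, is an unstable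
equilibrium (`F(x̃) = 0`, `F'(x̃) > 0`), and separates the basins of attraction
of `0` and `1`: solutions of `ẋ = F(x)` with `x(0) ∈ (x̃,1)` converge to `1`
and solutions with `x(0) ∈ (0,x̃)` converge to `0`. -/
theorem interior_equilibrium_separatrix
    (α N u lam : ℝ) (hα : 0 < α) (hN : 0 < N) (hu : 0 < u)
    (k : ℕ) (hk : 3 ≤ k)
    (hlam : |lam| < u * (1 - 2 / (k : ℝ)))
    (F : ℝ → ℝ)
    (hF : F = fun x => (α / N) * x * (x - 1) *
      (2 * u * ((-(k : ℝ) + 3 - 2 / (k : ℝ)) * x - 1 + 1 / (k : ℝ))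
        + (lam + u) * ((k : ℝ) - 1)))
    (xt : ℝ) (hxt : xt = lam / (2 * u * (1 - 2 / (k : ℝ))) + 1 / 2) :
    xt ∈ Set.Ioo (0:ℝ) 1 ∧ F xt = 0 ∧ 0 < deriv F xt ∧
    (∀ f : ℝ → ℝ, (∀ t, HasDerivAt f (F (f t)) t) →
      (f 0 ∈ Set.Ioo xt 1 → Tendsto f atTop (nhds 1)) ∧
      (f 0 ∈ Set.Ioo 0 xt → Tendsto f atTop (nhds 0))) := by
  have hK3 : (3:ℝ) ≤ (k:ℝ) := by exact_mod_cast hk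
  have hK0 : (0:ℝ) < (k:ℝ) := by linarith
  have hKne : ((k:ℝ)) ≠ 0 := ne_of_gt hK0
  set Kr : ℝ := (k:ℝ) with hKr
  have hc : 0 < 1 - 2 / Kr := by
    have : 2 / Kr ≤ 2 / 3 := by
      apply div_le_div_of_nonneg_left (by norm_num) (by norm_num) hK3
    linarith
  have h2uc : 0 < 2 * u * (1 - 2 / Kr) := by positivity
  have habs := abs_lt.mp hlam
  -- xt ∈ (0,1)
  have hxt0 : 0 < xt := by
    rw [hxt]
    have : -(1/2 : ℝ) < lam / (2 * u * (1 - 2 / Kr)) := by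
      rw [lt_div_iff₀ h2uc]
      nlinarith [habs.1]
    linarith
  have hxt1 : xt < 1 := by
    rw [hxt]
    have : lam / (2 * u * (1 - 2 / Kr)) < 1/2 := by
      rw [div_lt_iff₀ h2uc]
      nlinarith [habs.2]
    linarith
  -- rewrite F as a product of linear factors
  set c0 : ℝ := α / N with hc0def
  have hc0 : 0 < c0 := div_pos hα hN
  set A : ℝ := 2 * u * (-Kr + 3 - 2 / Kr) with hAdef
  have hA : A < 0 := by
    have h1 : -Kr + 3 - 2 / Kr < 0 := by
      have : 0 < 2 / Kr := by positivity
      linarith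
    have := mul_pos (by linarith : (0:ℝ) < 2 * u) (by linarith : 0 < -( -Kr + 3 - 2 / Kr))
    nlinarith
  set B : ℝ := 2 * u * (-1 + 1 / Kr) + (lam + u) * (Kr - 1) with hBdef
  have hroot : A * xt + B = 0 := by
    have h2K : (2:ℝ) < Kr := by linarith
    have hKm2 : Kr - 2 ≠ 0 := by intro h; rw [sub_eq_zero] at h; linarith
    have hcne : (1 : ℝ) - 2 / Kr ≠ 0 := ne_of_gt hc
    rw [hAdef, hBdef, hxt]
    field_simp
    ring
  have hFeq : ∀ x, F x = c0 * x * (x - 1) * (A * (x - xt)) := by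
    intro x
    have h1 : A * (x - xt) = A * x + B := by
      have : A * (x - xt) = A * x - (A * xt) := by ring
      rw [this]; linarith [hroot]
    rw [h1, hF]
    simp only [hc0def, hAdef, hBdef]
    ring
  have hFfun : F = fun x => c0 * x * (x - 1) * (A * (x - xt)) := funext hFeq
  -- derivative of F
  have hFder : ∀ x : ℝ, HasDerivAt F
      (c0 * (x - 1) * (A * (x - xt)) + c0 * x * (A * (x - xt))
        + c0 * x * (x - 1) * A) x := by
    intro x
    rw [hFfun]
    have h1 : HasDerivAt (fun y : ℝ => c0 * y) c0 x := by
      simpa using (hasDerivAt_id x).const_mul c0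
    have h2 : HasDerivAt (fun y : ℝ => y - 1) 1 x := (hasDerivAt_id x).sub_const 1
    have h3 : HasDerivAt (fun y : ℝ => A * (y - xt)) A x := by
      simpa using ((hasDerivAt_id x).sub_const xt).const_mul A
    have := ((h1.mul h2).mul h3)
    exact this.congr_deriv (by simp only [Pi.mul_apply]; ring)
  have hFd : Differentiable ℝ F := fun x => (hFder x).differentiableAt
  have hderiv_eq : deriv F = fun x => c0 * (x - 1) * (A * (x - xt)) + c0 * x * (A * (x - xt))
      + c0 * x * (x - 1) * A := funext fun x => (hFder x).deriv
  have hFd' : Continuous (deriv F) := by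
    rw [hderiv_eq]; fun_prop
  -- values of F
  have hF0 : F 0 = 0 := by rw [hFeq]; ring
  have hF1 : F 1 = 0 := by rw [hFeq]; ring
  have hFxt : F xt = 0 := by rw [hFeq]; ring
  -- sign of F on the two intervals
  have hpos1 : ∀ x ∈ Ioo xt 1, 0 < F x := by
    intro x hx
    rw [hFeq]
    have hx0 : 0 < x := lt_trans hxt0 hx.1
    have h1 : 0 < c0 * x := mul_pos hc0 hx0
    have h2 : 0 < (x - 1) * (A * (x - xt)) :=
      mul_pos_of_neg_of_neg (by linarith [hx.2])
        (mul_neg_of_neg_of_pos hA (by linarith [hx.1]))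
    have h3 : c0 * x * (x - 1) * (A * (x - xt))
        = (c0 * x) * ((x - 1) * (A * (x - xt))) := by ring
    rw [h3]
    exact mul_pos h1 h2
  have hneg0 : ∀ x ∈ Ioo (0:ℝ) xt, F x < 0 := by
    intro x hx
    rw [hFeq]
    have hx1 : x < 1 := lt_trans hx.2 hxt1
    have h1 : 0 < c0 * x := mul_pos hc0 hx.1
    have h2 : 0 < (x - 1) * (A * (x - xt)) * (-1) := by
      have ha : x - 1 < 0 := by linarith
      have hb : 0 < A * (x - xt) := mul_pos_of_neg_of_neg hA (by linarith [hx.2])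
      nlinarith
    have h3 : c0 * x * (x - 1) * (A * (x - xt))
        = -((c0 * x) * ((x - 1) * (A * (x - xt)) * (-1))) := by ring
    rw [h3]
    have := mul_pos h1 h2
    linarith
  -- derivative at xt
  have hderxt : deriv F xt = c0 * xt * (xt - 1) * A := by
    rw [(hFder xt).deriv]; ring
  refine ⟨⟨hxt0, hxt1⟩, hFxt, ?_, ?_⟩
  · rw [hderxt]
    have h1 : 0 < c0 * xt := mul_pos hc0 hxt0
    have h2 : 0 < (xt - 1) * A :=
      mul_pos_of_neg_of_neg (by linarith) hA
    have h3 : c0 * xt * (xt - 1) * A = (c0 * xt) * ((xt - 1) * A) := by ring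
    rw [h3]
    exact mul_pos h1 h2
  · intro f hf
    constructor
    · intro hf0
      exact tendsto_of_pos_between F hFd hFd' xt 1 hFxt hF1 hpos1 f hf hf0
    · intro hf0
      -- reflect: g t = -f t solves ẏ = G y with G y = -F (-y)
      set G : ℝ → ℝ := fun y => -F (-y) with hGdef
      have hGder : ∀ y : ℝ, HasDerivAt G (deriv F (-y)) y := by
        intro y
        have h1 : HasDerivAt (fun z : ℝ => F (-z)) (deriv F (-y) * (-1)) y :=
          HasDerivAt.comp y (hFd (-y)).hasDerivAt (hasDerivAt_neg y)
        have := h1.neg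
        exact this.congr_deriv (by ring)
      have hGd : Differentiable ℝ G := fun y => (hGder y).differentiableAt
      have hGderiv_eq : deriv G = fun y => deriv F (-y) := funext fun y => (hGder y).deriv
      have hGd' : Continuous (deriv G) := by
        rw [hGderiv_eq]
        exact hFd'.comp continuous_neg
      have hGa : G (-xt) = 0 := by simp [hGdef, hFxt]
      have hGb : G 0 = 0 := by simp [hGdef, hF0]
      have hGpos : ∀ y ∈ Ioo (-xt) (0:ℝ), 0 < G y := by
        intro y hy
        have : -y ∈ Ioo (0:ℝ) xt := ⟨by linarith [hy.2], by linarith [hy.1]⟩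
        have := hneg0 _ this
        simp only [hGdef]
        linarith
      set g : ℝ → ℝ := fun t => -f t with hgdef
      have hg : ∀ t, HasDerivAt g (G (g t)) t := by
        intro t
        have := (hf t).neg
        exact this.congr_deriv (by simp [hgdef, hGdef])
      have hg0 : g 0 ∈ Ioo (-xt) (0:ℝ) := by
        simp only [hgdef, Set.mem_Ioo]
        constructor <;> [linarith [hf0.2]; linarith [hf0.1]]
      have htend := tendsto_of_pos_between G hGd hGd' (-xt) 0 hGa hGb hGpos g hg hg0
      have := htend.neg
      simpa [hgdef] using this
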